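/- arXiv:2402.01144 — 2 statements merged into one kernel-verified Lean document; each statement's English description precedes it below -/
import Mathlib

section
/- For a secret of bit-length ℓ and threshold k ≥ 2, in the evolving k-threshold scheme over F_2[x] where the t-th share is Z_t = ∑_{j=0}^{k−2} r_j y_t^j + s y_t^{k−1} (mod x^{(ℓ_t−1)(k−1)+ℓ}), the bit-length of the t-th share equals (k−1)(ℓ_t − 1) + ℓ, where ℓ_t is the prefix-code length of t. In particular, using the Elias δ code, the share size equals (k−1)⌊lg t⌋ + 2(k−1)⌊lg(⌊lg t⌋ + 1)⌋ + ℓ. -/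
open Polynomial Finset

/-- Share size in the evolving `k`-threshold scheme over `F₂[x]`: the `t`-th
share `Z_t = ∑_{j<k−1} r_j y^j + s y^{k−1} (mod x^{(ℓₜ−1)(k−1)+ℓ})` is a
polynomial of degree `< (k−1)(ℓₜ−1)+ℓ`, hence has bit-length
`(k−1)(ℓₜ−1)+ℓ`; with the Elias δ code, `ℓₜ = ⌊lg t⌋+2⌊lg(⌊lg t⌋+1)⌋+1` and
the share size equals `(k−1)⌊lg t⌋+2(k−1)⌊lg(⌊lg t⌋+1)⌋+ℓ`. -/
theorem stmt_12 (k ℓ t ℓt : ℕ) (hk : 2 ≤ k) (hℓ : 1 ≤ ℓ) (ht : 1 ≤ t)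
    (hℓt : 1 ≤ ℓt) (r : ℕ → (ZMod 2)[X]) (s y : (ZMod 2)[X]) :
    ((∑ j ∈ Finset.range (k - 1), r j * y ^ j + s * y ^ (k - 1)) %ₘ
        (X ^ ((ℓt - 1) * (k - 1) + ℓ))).natDegree < (k - 1) * (ℓt - 1) + ℓ ∧
    (ℓt = Nat.log 2 t + 2 * Nat.log 2 (Nat.log 2 t + 1) + 1 →
      (k - 1) * (ℓt - 1) + ℓ =
        (k - 1) * Nat.log 2 t + 2 * (k - 1) * Nat.log 2 (Nat.log 2 t + 1) + ℓ) := by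
  constructor
  · have hmon : ((X : (ZMod 2)[X]) ^ ((ℓt - 1) * (k - 1) + ℓ)).Monic :=
      monic_X_pow _
    have hd := degree_modByMonic_lt
      (∑ j ∈ Finset.range (k - 1), r j * y ^ j + s * y ^ (k - 1)) hmon
    rw [degree_X_pow] at hd
    have hpos : 0 < (ℓt - 1) * (k - 1) + ℓ := by omega
    rcases eq_or_ne ((∑ j ∈ Finset.range (k - 1), r j * y ^ j + s * y ^ (k - 1)) %ₘ
        (X ^ ((ℓt - 1) * (k - 1) + ℓ))) 0 with h0 | h0
    · rw [h0, natDegree_zero]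
      omega
    · have := (natDegree_lt_iff_degree_lt h0).mpr hd
      exact lt_of_lt_of_eq this (by ring)
  · intro h
    subst h
    have hk1 : 1 ≤ k - 1 := by omega
    simp only [Nat.add_sub_cancel]
    ring
end

section
/- Fix distinct polynomials y_{i_1}, ..., y_{i_{k−1}} (polynomial forms of distinct prefix codewords over F_p of lengths ℓ_{i_1} ≤ ... ≤ ℓ_{i_{k−1}}), moduli L_{i_m} = (ℓ_{i_m}−1)(k−1)+ℓ, target values z_{i_m} ∈ F_p[x]/x^{L_{i_m}}, and two secrets s_0 ≠ s_1 in F_p[x]/x^ℓ. For h ∈ {0,1}, let N_h be the number of tuples (r_{h,0}, ..., r_{h,k−2}) ∈ (F_p[x]/x^{L_{i_{k−1}}})^{k−1} satisfying z_{i_m} ≡ ∑_{j=0}^{k−2} r_{h,j} y_{i_m}^j + s_h y_{i_m}^{k−1} (mod x^{L_{i_m}}) for all 1 ≤ m ≤ k−1. Then N_0 = N_1. -/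
open Polynomial Finset

/-- Security counting lemma: for distinct prefix-codeword polynomials
`y_m` with moduli `L m = (len m − 1)(k−1) + ℓ`, targets `z m`, and two
secrets `s₀ ≠ s₁` of degree `< ℓ`, the numbers of tuples
`(r_0, …, r_{k−2})` of polynomials of degree `< L_{max}` solving the
share equations for `s₀` and for `s₁` coincide. -/
theorem stmt_17 {F : Type*} [Field F] [Fintype F]
    (k ℓ : ℕ) (hk : 2 ≤ k) (hℓ : 1 ≤ ℓ)
    (len : Fin (k - 1) → ℕ) (hlen1 : ∀ m, 1 ≤ len m)
    (hmono : Monotone len)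
    (y : Fin (k - 1) → F[X]) (hy : Function.Injective y)
    (z : Fin (k - 1) → F[X])
    (s₀ s₁ : F[X]) (hs₀ : s₀.natDegree < ℓ) (hs₁ : s₁.natDegree < ℓ)
    (hne : s₀ ≠ s₁)
    (L : Fin (k - 1) → ℕ) (hL : ∀ m, L m = (len m - 1) * (k - 1) + ℓ)
    (Lmax : ℕ) (hLmax : Lmax = L ⟨k - 2, by omega⟩) :
    Nat.card {r : Fin (k - 1) → F[X] //
        (∀ j, (r j).natDegree < Lmax) ∧
        ∀ m, X ^ (L m) ∣
          (∑ j : Fin (k - 1), r j * y m ^ (j : ℕ)) + s₀ * y m ^ (k - 1) - z m}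
    = Nat.card {r : Fin (k - 1) → F[X] //
        (∀ j, (r j).natDegree < Lmax) ∧
        ∀ m, X ^ (L m) ∣
          (∑ j : Fin (k - 1), r j * y m ^ (j : ℕ)) + s₁ * y m ^ (k - 1) - z m} := by
  have hk1 : 1 ≤ k - 1 := by omega
  set q : F[X] := X ^ Lmax with hqdef
  have hqm : q.Monic := monic_X_pow _
  have hLmax_pos : 0 < Lmax := by
    rw [hLmax, hL]; omega
  have hLle : ∀ m : Fin (k - 1), L m ≤ Lmax := by
    intro m
    rw [hLmax, hL, hL]
    have hmle : len m ≤ len ⟨k - 2, by omega⟩ := by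
      apply hmono
      have := m.2
      simp only [Fin.le_def]
      omega
    have := Nat.sub_le_sub_right hmle 1
    exact Nat.add_le_add_right (Nat.mul_le_mul_right _ this) ℓ
  -- basic modByMonic facts
  have degnat : ∀ p : F[X], p.degree < (Lmax : ℕ) → p.natDegree < Lmax := by
    intro p h
    rcases eq_or_ne p 0 with rfl | h0
    · simpa using hLmax_pos
    · exact (natDegree_lt_iff_degree_lt h0).mpr h
  have hqdeg : q.degree = (Lmax : ℕ) := by rw [hqdef, degree_X_pow]
  have hmod_self : ∀ p : F[X], p.natDegree < Lmax → p %ₘ q = p := by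
    intro p h
    rw [modByMonic_eq_self_iff hqm, hqdeg]
    exact lt_of_le_of_lt degree_le_natDegree (by exact_mod_cast h)
  have hmoddeg : ∀ p : F[X], (p %ₘ q).natDegree < Lmax := by
    intro p
    exact degnat _ (by rw [← hqdeg]; exact degree_modByMonic_lt p hqm)
  have hdvd_mod : ∀ p : F[X], X ^ Lmax ∣ (p %ₘ q - p) := by
    intro p
    refine ⟨-(p /ₘ q), ?_⟩
    rw [modByMonic_eq_sub_mul_div p q, hqdef]
    ring
  -- the elementary-symmetric translation tuple
  set Q : F[X][X] := ∏ m : Fin (k - 1), (Polynomial.X - Polynomial.C (y m)) with hQdef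
  have hQm : Q.Monic := monic_prod_of_monic _ _ fun _ _ => monic_X_sub_C _
  have hQdeg : Q.natDegree = k - 1 := by
    rw [hQdef, natDegree_prod]
    · simp
    · intro i _; exact X_sub_C_ne_zero _
  set D : F[X][X] := Polynomial.X ^ (k - 1) - Q with hDdef
  have hDdeg : D.natDegree < k - 1 := by
    rcases eq_or_ne D 0 with h | h
    · rw [h]; simp only [natDegree_zero]; omega
    · rw [natDegree_lt_iff_degree_lt h]
      have hdeg : (Polynomial.X ^ (k - 1) : F[X][X]).degree = ((k - 1 : ℕ) : WithBot ℕ) :=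
        degree_X_pow _
      have : ((Polynomial.X : F[X][X]) ^ (k - 1) - Q).degree <
          (Polynomial.X ^ (k - 1) : F[X][X]).degree := by
        apply degree_sub_lt
        · rw [hdeg, degree_eq_natDegree hQm.ne_zero, hQdeg]
        · exact pow_ne_zero _ X_ne_zero
        · rw [(monic_X_pow _).leadingCoeff, hQm.leadingCoeff]
      rw [← hDdef, hdeg] at this
      exact this
  have hc : ∀ m, ∑ j : Fin (k - 1), D.coeff (j : ℕ) * y m ^ (j : ℕ) = y m ^ (k - 1) := by
    intro m
    have h0 : Q.eval (y m) = 0 := by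
      rw [hQdef, eval_prod]
      exact Finset.prod_eq_zero (mem_univ m) (by simp)
    calc ∑ j : Fin (k - 1), D.coeff (j : ℕ) * y m ^ (j : ℕ)
        = ∑ i ∈ Finset.range (k - 1), D.coeff i * y m ^ i :=
          Fin.sum_univ_eq_sum_range (fun i => D.coeff i * y m ^ i) (k - 1)
      _ = D.eval (y m) := (eval_eq_sum_range' hDdeg _).symm
      _ = y m ^ (k - 1) := by rw [hDdef, eval_sub, eval_pow, eval_X, h0, sub_zero]
  -- key one-directional lemma
  have key : ∀ (a b : F[X]) (t : Fin (k - 1) → F[X]),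
      (∀ m, ∑ j : Fin (k - 1), t j * y m ^ (j : ℕ) = (a - b) * y m ^ (k - 1)) →
      ∀ r : Fin (k - 1) → F[X],
        ((∀ j, (r j).natDegree < Lmax) ∧
          ∀ m, X ^ (L m) ∣
            (∑ j : Fin (k - 1), r j * y m ^ (j : ℕ)) + a * y m ^ (k - 1) - z m) →
        ((∀ j, ((r j + t j) %ₘ q).natDegree < Lmax) ∧
          ∀ m, X ^ (L m) ∣
            (∑ j : Fin (k - 1), ((r j + t j) %ₘ q) * y m ^ (j : ℕ)) + b * y m ^ (k - 1) - z m) := by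
    intro a b t ht r hr
    obtain ⟨hdeg, hdvd⟩ := hr
    refine ⟨fun j => hmoddeg _, ?_⟩
    intro m
    have h1 : X ^ (L m) ∣ ∑ j : Fin (k - 1),
        (((r j + t j) %ₘ q) - (r j + t j)) * y m ^ (j : ℕ) := by
      apply Finset.dvd_sum
      intro j _
      exact dvd_mul_of_dvd_left (dvd_trans (pow_dvd_pow X (hLle m)) (hdvd_mod _)) _
    have h2 := hdvd m
    have hsum : (∑ j : Fin (k - 1), ((r j + t j) %ₘ q) * y m ^ (j : ℕ))
          + b * y m ^ (k - 1) - z m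
        = ((∑ j : Fin (k - 1), r j * y m ^ (j : ℕ)) + a * y m ^ (k - 1) - z m)
          + ∑ j : Fin (k - 1), (((r j + t j) %ₘ q) - (r j + t j)) * y m ^ (j : ℕ) := by
      have h := ht m
      simp only [sub_mul, add_mul, Finset.sum_sub_distrib, Finset.sum_add_distrib, h]
      ring
    rw [hsum]
    exact dvd_add h2 h1
  set t₀ : Fin (k - 1) → F[X] := fun j => (s₀ - s₁) * D.coeff (j : ℕ) with ht₀def
  have ht₀ : ∀ m, ∑ j : Fin (k - 1), t₀ j * y m ^ (j : ℕ) = (s₀ - s₁) * y m ^ (k - 1) := by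
    intro m
    rw [ht₀def]
    simp only [mul_assoc]
    rw [← Finset.mul_sum, hc]
  have ht₁ : ∀ m, ∑ j : Fin (k - 1), (-t₀ j) * y m ^ (j : ℕ) = (s₁ - s₀) * y m ^ (k - 1) := by
    intro m
    have := ht₀ m
    simp only [neg_mul, Finset.sum_neg_distrib]
    rw [this]; ring
  -- cancellation of the two translations
  have hcancel : ∀ (u : Fin (k - 1) → F[X]) (j : Fin (k - 1)), (u j).natDegree < Lmax →
      ∀ v : F[X], ((u j + v) %ₘ q + -v) %ₘ q = u j := by
    intro u j hu v
    rw [add_modByMonic, hmod_self _ (hmoddeg _), ← add_modByMonic]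
    rw [add_neg_cancel_right]
    exact hmod_self _ hu
  apply Nat.card_congr
  refine ⟨fun r => ⟨fun j => (r.1 j + t₀ j) %ₘ q, key s₀ s₁ t₀ ht₀ r.1 r.2⟩,
    fun r => ⟨fun j => (r.1 j + -t₀ j) %ₘ q, key s₁ s₀ (fun j => -t₀ j) ht₁ r.1 r.2⟩, ?_, ?_⟩
  · intro r
    apply Subtype.ext
    funext j
    exact hcancel r.1 j (r.2.1 j) (t₀ j)
  · intro r
    apply Subtype.ext
    funext j
    have := hcancel r.1 j (r.2.1 j) (-t₀ j)
    simpa using this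
end
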